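/- Let Ω be a measure space and (λ_n) a sequence with λ_n ≥ λ₁ > 0. Suppose F ∈ L²(0,T; ℓ²) with components F_n, and v_n : (0,T) → ℝ are nonnegative with ∫₀^T v_n(t)dt ≤ 1/λ_n. Then the functions w_n(t) = ∫₀^t v_n(t-τ)F_n(τ)dτ satisfy Σ_n λ_n² ‖w_n‖²_{L²(0,T)} ≤ Σ_n ‖F_n‖²_{L²(0,T)}. -/

import Mathlib

open MeasureTheory intervalIntegral

section Helpers

open Set
open scoped ENNReal

private lemma lint_reflect (f : ℝ → ℝ≥0∞) (c : ℝ) (s : Set ℝ) :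
    ∫⁻ τ in s, f (c - τ) = ∫⁻ u in (fun τ => c - τ) '' s, f u :=
  (Measure.measurePreserving_sub_left volume c).setLIntegral_comp_emb
    (MeasurableEquiv.subLeft c).measurableEmbedding f s

private lemma lint_shift (f : ℝ → ℝ≥0∞) (c : ℝ) (s : Set ℝ) :
    ∫⁻ t in s, f (t - c) = ∫⁻ u in (fun t => t - c) '' s, f u :=
  (measurePreserving_sub_right volume c).setLIntegral_comp_emb
    (MeasurableEquiv.subRight c).measurableEmbedding f s

private lemma lint_CS (μ : Measure ℝ) {f g : ℝ → ℝ≥0∞} (hf : AEMeasurable f μ)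
    (hg : AEMeasurable g μ) :
    (∫⁻ x, f x * g x ∂μ) ^ 2 ≤ (∫⁻ x, f x ^ 2 ∂μ) * (∫⁻ x, g x ^ 2 ∂μ) := by
  have hpq : Real.HolderConjugate 2 2 := Real.HolderConjugate.two_two
  have h := ENNReal.lintegral_mul_le_Lp_mul_Lq μ hpq hf hg
  have h2 : ∀ x : ℝ≥0∞, x ^ (2:ℝ) = x ^ (2:ℕ) := fun x => by
    rw [← ENNReal.rpow_natCast x 2]; norm_num
  have hr : ∀ X : ℝ≥0∞, (X ^ (1/2:ℝ)) ^ (2:ℕ) = X := fun X => by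
    rw [← ENNReal.rpow_natCast (X ^ (1/2:ℝ)) 2, ← ENNReal.rpow_mul]; norm_num
  calc (∫⁻ x, f x * g x ∂μ) ^ 2
      ≤ ((∫⁻ x, f x ^ (2:ℝ) ∂μ) ^ (1/2:ℝ) * (∫⁻ x, g x ^ (2:ℝ) ∂μ) ^ (1/2:ℝ)) ^ 2 :=
        pow_le_pow_left' (h.trans_eq (by rfl)) 2
    _ = (∫⁻ x, f x ^ 2 ∂μ) * (∫⁻ x, g x ^ 2 ∂μ) := by
        rw [mul_pow, hr, hr]
        simp_rw [h2]

private lemma key_estimate (T lamn : ℝ) (hT : 0 < T) (hl : 0 < lamn)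
    (v F : ℝ → ℝ)
    (hv_nonneg : ∀ t ∈ Ioc (0:ℝ) T, 0 ≤ v t)
    (hv_int : IntegrableOn v (Ioc 0 T))
    (hv_bound : (∫ t in Ioc (0:ℝ) T, v t) ≤ 1 / lamn)
    (hF_meas : Measurable F)
    (hF_L2 : IntegrableOn (fun t => F t ^ 2) (Ioc 0 T))
    (w : ℝ → ℝ)
    (hw : ∀ t ∈ Ioc (0:ℝ) T, w t = ∫ τ in (0:ℝ)..t, v (t - τ) * F τ) :
    lamn ^ 2 * ∫ t in Ioc (0:ℝ) T, w t ^ 2 ≤ ∫ t in Ioc (0:ℝ) T, F t ^ 2 := by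
  have hF2nonneg : (0:ℝ) ≤ ∫ t in Ioc (0:ℝ) T, F t ^ 2 :=
    integral_nonneg fun t => sq_nonneg _
  by_cases hWint : IntegrableOn (fun t => w t ^ 2) (Ioc 0 T)
  swap
  · rw [MeasureTheory.integral_undef hWint, mul_zero]; exact hF2nonneg
  -- measurable version of v
  obtain ⟨g, hg_sm, hg_ae⟩ := hv_int.aestronglyMeasurable
  have hgm : Measurable g := hg_sm.measurable
  have hN : volume ({x | v x ≠ g x} ∩ Ioc (0:ℝ) T) = 0 := by
    have h := ae_iff.mp hg_ae
    rwa [Measure.restrict_apply' measurableSet_Ioc] at h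
  have hw' : ∀ t ∈ Ioc (0:ℝ) T, w t = ∫ τ in Ioc (0:ℝ) t, g (t - τ) * F τ := by
    intro t ht
    rw [hw t ht, intervalIntegral.integral_of_le ht.1.le]
    refine integral_congr_ae ?_
    have hnull : volume ((fun τ => t - τ) ⁻¹' ({x | v x ≠ g x} ∩ Ioc (0:ℝ) T)) = 0 :=
      (Measure.measurePreserving_sub_left volume t).quasiMeasurePreserving.preimage_null hN
    have hsub : {τ | ¬ v (t - τ) * F τ = g (t - τ) * F τ} ∩ Ioc (0:ℝ) t ⊆
        ((fun τ => t - τ) ⁻¹' ({x | v x ≠ g x} ∩ Ioc (0:ℝ) T)) ∪ {t} := by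
      rintro τ ⟨hτ1, hτ2⟩
      by_cases hτt : τ = t
      · exact Or.inr hτt
      · left
        have hvg : v (t - τ) ≠ g (t - τ) := by
          intro hc; exact hτ1 (by rw [hc])
        refine ⟨hvg, ?_, ?_⟩
        · show (0:ℝ) < t - τ
          have : τ < t := lt_of_le_of_ne hτ2.2 hτt
          linarith
        · show t - τ ≤ T
          have := hτ2.1
          linarith [ht.2]
    have : volume ({τ | ¬ v (t - τ) * F τ = g (t - τ) * F τ} ∩ Ioc (0:ℝ) t) = 0 :=
      measure_mono_null hsub (le_antisymm
        ((measure_union_le _ _).trans (by rw [hnull, measure_singleton]; simp)) (zero_le))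
    rw [Filter.EventuallyEq, ae_iff, Measure.restrict_apply' measurableSet_Ioc]
    exact this
  -- ENNReal setup
  set G : ℝ → ℝ≥0∞ := fun s => (‖g s‖₊ : ℝ≥0∞) with hGdef
  set H : ℝ → ℝ≥0∞ := fun s => (‖F s‖₊ : ℝ≥0∞) with hHdef
  have hGm : Measurable G := hgm.nnnorm.coe_nnreal_ennreal
  have hHm : Measurable H := hF_meas.nnnorm.coe_nnreal_ennreal
  set A : ℝ≥0∞ := ∫⁻ s in Ioc (0:ℝ) T, G s with hAdef
  set B : ℝ≥0∞ := ∫⁻ s in Ioc (0:ℝ) T, H s ^ 2 with hBdef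
  have hAval : A = ENNReal.ofReal (∫ t in Ioc (0:ℝ) T, v t) := by
    rw [ofReal_integral_eq_lintegral_ofReal hv_int
      ((ae_restrict_iff' measurableSet_Ioc).mpr (Filter.Eventually.of_forall hv_nonneg))]
    refine lintegral_congr_ae ?_
    have hvn : ∀ᵐ x ∂(volume.restrict (Ioc (0:ℝ) T)), 0 ≤ v x :=
      (ae_restrict_iff' measurableSet_Ioc).mpr (Filter.Eventually.of_forall hv_nonneg)
    filter_upwards [hg_ae, hvn] with x hx hx2
    rw [hGdef]; simp only []
    rw [← hx, ← enorm_eq_nnnorm, Real.enorm_eq_ofReal hx2]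
  have hAne : A ≠ ⊤ := by rw [hAval]; exact ENNReal.ofReal_ne_top
  have hAle : A ≤ ENNReal.ofReal (1 / lamn) := by
    rw [hAval]; exact ENNReal.ofReal_le_ofReal hv_bound
  have hBval : B = ENNReal.ofReal (∫ t in Ioc (0:ℝ) T, F t ^ 2) := by
    rw [ofReal_integral_eq_lintegral_ofReal hF_L2
      (Filter.Eventually.of_forall fun t => sq_nonneg _)]
    refine lintegral_congr fun x => ?_
    rw [hHdef]
    simp only []
    rw [← enorm_eq_nnnorm, Real.enorm_eq_ofReal_abs, ← ENNReal.ofReal_pow (abs_nonneg _), sq_abs]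
  -- change of variables bounds
  have hGbound : ∀ t ∈ Ioc (0:ℝ) T, (∫⁻ τ in Ioc (0:ℝ) t, G (t - τ)) ≤ A := by
    intro t ht
    rw [lint_reflect G t (Ioc 0 t), Set.image_const_sub_Ioc]
    simp only [sub_self, sub_zero]
    rw [Measure.restrict_congr_set Ico_ae_eq_Ioc]
    exact lintegral_mono_set (Ioc_subset_Ioc_right ht.2)
  have hGbound2 : ∀ τ ∈ Ioc (0:ℝ) T, (∫⁻ t in Icc τ T, G (t - τ)) ≤ A := by
    intro τ hτ
    rw [lint_shift G τ (Icc τ T), Set.image_sub_const_Icc]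
    simp only [sub_self]
    rw [Measure.restrict_congr_set (Ioc_ae_eq_Icc (a := (0:ℝ)) (b := T - τ)).symm]
    exact lintegral_mono_set (Ioc_subset_Ioc_right (by linarith [hτ.1]))
  -- pointwise Cauchy-Schwarz
  have hstep1 : ∀ t ∈ Ioc (0:ℝ) T,
      (‖w t‖₊ : ℝ≥0∞) ^ 2 ≤ A * ∫⁻ τ in Ioc (0:ℝ) t, G (t - τ) * H τ ^ 2 := by
    intro t ht
    have h1 : (‖w t‖₊ : ℝ≥0∞) ≤ ∫⁻ τ in Ioc (0:ℝ) t, G (t - τ) * H τ := by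
      rw [hw' t ht]
      refine (enorm_integral_le_lintegral_enorm _).trans_eq ?_
      refine lintegral_congr fun τ => ?_
      rw [hGdef, hHdef]; simp only []
      rw [enorm_eq_nnnorm, nnnorm_mul, ENNReal.coe_mul]
    have hrr : ∀ x : ℝ≥0∞, x ^ (1/2:ℝ) * x ^ (1/2:ℝ) = x := fun x => by
      rw [← ENNReal.rpow_add_of_nonneg _ _ (by norm_num) (by norm_num)]; norm_num
    have hr2 : ∀ x : ℝ≥0∞, (x ^ (1/2:ℝ)) ^ (2:ℕ) = x := fun x => by
      rw [← ENNReal.rpow_natCast (x ^ (1/2:ℝ)) 2, ← ENNReal.rpow_mul]; norm_num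
    have hfm : AEMeasurable (fun τ => G (t - τ) ^ (1/2:ℝ)) (volume.restrict (Ioc (0:ℝ) t)) :=
      ((hGm.comp (measurable_const.sub measurable_id)).pow_const _).aemeasurable
    have hgm2 : AEMeasurable (fun τ => G (t - τ) ^ (1/2:ℝ) * H τ)
        (volume.restrict (Ioc (0:ℝ) t)) :=
      (((hGm.comp (measurable_const.sub measurable_id)).pow_const _).mul hHm).aemeasurable
    have hCS := lint_CS (volume.restrict (Ioc (0:ℝ) t)) hfm hgm2
    have e1 : (∫⁻ τ in Ioc (0:ℝ) t, G (t - τ) ^ (1/2:ℝ) * (G (t - τ) ^ (1/2:ℝ) * H τ))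
        = ∫⁻ τ in Ioc (0:ℝ) t, G (t - τ) * H τ := by
      refine lintegral_congr fun τ => ?_
      rw [← mul_assoc, hrr]
    have e2 : (∫⁻ τ in Ioc (0:ℝ) t, (G (t - τ) ^ (1/2:ℝ)) ^ 2)
        = ∫⁻ τ in Ioc (0:ℝ) t, G (t - τ) := lintegral_congr fun τ => hr2 _
    have e3 : (∫⁻ τ in Ioc (0:ℝ) t, (G (t - τ) ^ (1/2:ℝ) * H τ) ^ 2)
        = ∫⁻ τ in Ioc (0:ℝ) t, G (t - τ) * H τ ^ 2 := by
      refine lintegral_congr fun τ => ?_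
      rw [mul_pow, hr2]
    rw [e1, e2, e3] at hCS
    calc (‖w t‖₊ : ℝ≥0∞) ^ 2
        ≤ (∫⁻ τ in Ioc (0:ℝ) t, G (t - τ) * H τ) ^ 2 := pow_le_pow_left' h1 2
      _ ≤ (∫⁻ τ in Ioc (0:ℝ) t, G (t - τ)) * ∫⁻ τ in Ioc (0:ℝ) t, G (t - τ) * H τ ^ 2 := hCS
      _ ≤ A * ∫⁻ τ in Ioc (0:ℝ) t, G (t - τ) * H τ ^ 2 :=
          mul_le_mul_left (hGbound t ht) _
  -- Tonelli / Fubini step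
  have hS : (∫⁻ t in Ioc (0:ℝ) T, ∫⁻ τ in Ioc (0:ℝ) t, G (t - τ) * H τ ^ 2) ≤ B * A := by
    set Θ : ℝ → ℝ → ℝ≥0∞ := fun t τ => if τ ≤ t then G (t - τ) * H τ ^ 2 else 0 with hΘdef
    have hΘm : AEMeasurable (Function.uncurry Θ)
        ((volume.restrict (Ioc (0:ℝ) T)).prod (volume.restrict (Ioc (0:ℝ) T))) := by
      refine Measurable.aemeasurable ?_
      have : Function.uncurry Θ = fun p : ℝ × ℝ =>
          if p.2 ≤ p.1 then G (p.1 - p.2) * H p.2 ^ 2 else 0 := rfl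
      rw [this]
      exact Measurable.ite (measurableSet_le measurable_snd measurable_fst)
        ((hGm.comp (measurable_fst.sub measurable_snd)).mul
          ((hHm.comp measurable_snd).pow_const 2)) measurable_const
    have h1 : ∀ t ∈ Ioc (0:ℝ) T, (∫⁻ τ in Ioc (0:ℝ) t, G (t - τ) * H τ ^ 2)
        = ∫⁻ τ in Ioc (0:ℝ) T, Θ t τ := by
      intro t ht
      have hset : Ioc (0:ℝ) t = Iic t ∩ Ioc (0:ℝ) T := by
        ext τ
        simp only [mem_Ioc, mem_inter_iff, mem_Iic]
        constructor
        · rintro ⟨h1, h2⟩; exact ⟨h2, h1, h2.trans ht.2⟩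
        · rintro ⟨h1, h2, _⟩; exact ⟨h2, h1⟩
      rw [hset, ← Measure.restrict_restrict measurableSet_Iic,
        ← lintegral_indicator measurableSet_Iic]
      refine lintegral_congr fun τ => ?_
      rw [Set.indicator_apply, hΘdef]
      simp only [mem_Iic]
    have h2 : ∀ τ ∈ Ioc (0:ℝ) T, (∫⁻ t in Ioc (0:ℝ) T, Θ t τ)
        = ∫⁻ t in Icc τ T, G (t - τ) * H τ ^ 2 := by
      intro τ hτ
      have hset : Icc τ T = Ici τ ∩ Ioc (0:ℝ) T := by
        ext t
        simp only [mem_Icc, mem_inter_iff, mem_Ici, mem_Ioc]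
        constructor
        · rintro ⟨h1, h2⟩; exact ⟨h1, lt_of_lt_of_le hτ.1 h1, h2⟩
        · rintro ⟨h1, _, h2⟩; exact ⟨h1, h2⟩
      rw [hset, ← Measure.restrict_restrict measurableSet_Ici,
        ← lintegral_indicator measurableSet_Ici]
      refine (lintegral_congr fun t => ?_).symm
      rw [Set.indicator_apply, hΘdef]
      simp only [mem_Ici]
    have hHne : ∀ τ : ℝ, H τ ^ 2 ≠ ⊤ := fun τ =>
      ENNReal.pow_ne_top ENNReal.coe_ne_top
    calc (∫⁻ t in Ioc (0:ℝ) T, ∫⁻ τ in Ioc (0:ℝ) t, G (t - τ) * H τ ^ 2)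
        = ∫⁻ t in Ioc (0:ℝ) T, ∫⁻ τ in Ioc (0:ℝ) T, Θ t τ :=
          setLIntegral_congr_fun measurableSet_Ioc h1
      _ = ∫⁻ τ in Ioc (0:ℝ) T, ∫⁻ t in Ioc (0:ℝ) T, Θ t τ := lintegral_lintegral_swap hΘm
      _ = ∫⁻ τ in Ioc (0:ℝ) T, ∫⁻ t in Icc τ T, G (t - τ) * H τ ^ 2 :=
          setLIntegral_congr_fun measurableSet_Ioc h2
      _ ≤ ∫⁻ τ in Ioc (0:ℝ) T, H τ ^ 2 * A := by
          refine setLIntegral_mono ((hHm.pow_const 2).mul_const A) fun τ hτ => ?_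
          calc (∫⁻ t in Icc τ T, G (t - τ) * H τ ^ 2)
              = (∫⁻ t in Icc τ T, G (t - τ)) * H τ ^ 2 :=
                lintegral_mul_const' _ _ (hHne τ)
            _ ≤ A * H τ ^ 2 := mul_le_mul_left (hGbound2 τ hτ) _
            _ = H τ ^ 2 * A := mul_comm _ _
      _ = B * A := lintegral_mul_const' A _ hAne
  -- total bound
  have htotal : (∫⁻ t in Ioc (0:ℝ) T, (‖w t‖₊ : ℝ≥0∞) ^ 2) ≤ A * (B * A) := by
    calc (∫⁻ t in Ioc (0:ℝ) T, (‖w t‖₊ : ℝ≥0∞) ^ 2)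
        ≤ ∫⁻ t in Ioc (0:ℝ) T, A * ∫⁻ τ in Ioc (0:ℝ) t, G (t - τ) * H τ ^ 2 :=
          lintegral_mono_ae ((ae_restrict_iff' measurableSet_Ioc).mpr
            (Filter.Eventually.of_forall hstep1))
      _ = A * ∫⁻ t in Ioc (0:ℝ) T, ∫⁻ τ in Ioc (0:ℝ) t, G (t - τ) * H τ ^ 2 :=
          lintegral_const_mul' A _ hAne
      _ ≤ A * (B * A) := mul_le_mul_right hS A
  -- back to reals
  have hwle : (∫ t in Ioc (0:ℝ) T, w t ^ 2)
      ≤ (1/lamn) ^ 2 * ∫ t in Ioc (0:ℝ) T, F t ^ 2 := by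
    have h1 : (∫ t in Ioc (0:ℝ) T, w t ^ 2)
        = (∫⁻ t in Ioc (0:ℝ) T, ENNReal.ofReal (w t ^ 2)).toReal :=
      integral_eq_lintegral_of_nonneg_ae (Filter.Eventually.of_forall fun t => sq_nonneg _)
        hWint.aestronglyMeasurable
    have h2 : ∀ t : ℝ, ENNReal.ofReal (w t ^ 2) = (‖w t‖₊ : ℝ≥0∞) ^ 2 := fun t => by
      rw [← sq_abs, ENNReal.ofReal_pow (abs_nonneg _), ← enorm_eq_nnnorm, Real.enorm_eq_ofReal_abs]
    have hb : A * (B * A) ≤ ENNReal.ofReal ((1/lamn) ^ 2 * ∫ t in Ioc (0:ℝ) T, F t ^ 2) := by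
      rw [ENNReal.ofReal_mul (by positivity), ← hBval]
      calc A * (B * A) = (A * A) * B := by ring
        _ ≤ (ENNReal.ofReal (1/lamn) * ENNReal.ofReal (1/lamn)) * B :=
            mul_le_mul_left (mul_le_mul' hAle hAle) B
        _ = ENNReal.ofReal ((1/lamn) ^ 2) * B := by
            rw [← ENNReal.ofReal_mul (by positivity), ← sq]
    rw [h1]
    simp_rw [h2]
    refine le_trans (ENNReal.toReal_mono ENNReal.ofReal_ne_top (htotal.trans hb)) ?_
    rw [ENNReal.toReal_ofReal (mul_nonneg (by positivity) hF2nonneg)]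
  calc lamn ^ 2 * ∫ t in Ioc (0:ℝ) T, w t ^ 2
      ≤ lamn ^ 2 * ((1/lamn) ^ 2 * ∫ t in Ioc (0:ℝ) T, F t ^ 2) :=
        mul_le_mul_of_nonneg_left hwle (sq_nonneg _)
    _ = ∫ t in Ioc (0:ℝ) T, F t ^ 2 := by
        field_simp

end Helpers

/-- The regularity estimate for the direct problem:
`Σ_n λ_n² ‖v_n * F_n‖²_{L²(0,T)} ≤ Σ_n ‖F_n‖²_{L²(0,T)}`. -/
theorem direct_problem_regularity (T lam₁ : ℝ) (hT : 0 < T) (hlam₁ : 0 < lam₁)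
    (lam : ℕ → ℝ) (hlam : ∀ n, lam₁ ≤ lam n)
    (v F : ℕ → ℝ → ℝ)
    (hv_nonneg : ∀ n, ∀ t ∈ Set.Ioc (0 : ℝ) T, 0 ≤ v n t)
    (hv_int : ∀ n, IntegrableOn (v n) (Set.Ioc 0 T))
    (hv_bound : ∀ n, (∫ t in Set.Ioc (0 : ℝ) T, v n t) ≤ 1 / lam n)
    (hF_meas : ∀ n, Measurable (F n))
    (hF_L2 : ∀ n, IntegrableOn (fun t => (F n t) ^ 2) (Set.Ioc 0 T))
    (hF_sum : Summable fun n => ∫ t in Set.Ioc (0 : ℝ) T, (F n t) ^ 2)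
    (w : ℕ → ℝ → ℝ)
    (hw : ∀ n, ∀ t ∈ Set.Ioc (0 : ℝ) T, w n t = ∫ τ in (0 : ℝ)..t, v n (t - τ) * F n τ) :
    (∑' n, (lam n) ^ 2 * ∫ t in Set.Ioc (0 : ℝ) T, (w n t) ^ 2) ≤
      ∑' n, ∫ t in Set.Ioc (0 : ℝ) T, (F n t) ^ 2 := by
  have key : ∀ n, (lam n) ^ 2 * (∫ t in Set.Ioc (0 : ℝ) T, (w n t) ^ 2)
      ≤ ∫ t in Set.Ioc (0 : ℝ) T, (F n t) ^ 2 := fun n =>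
    key_estimate T (lam n) hT (lt_of_lt_of_le hlam₁ (hlam n)) (v n) (F n)
      (hv_nonneg n) (hv_int n) (hv_bound n) (hF_meas n) (hF_L2 n) (w n) (hw n)
  have hnonneg : ∀ n, 0 ≤ (lam n) ^ 2 * ∫ t in Set.Ioc (0 : ℝ) T, (w n t) ^ 2 := fun n =>
    mul_nonneg (sq_nonneg _) (integral_nonneg fun t => sq_nonneg _)
  exact Summable.tsum_le_tsum key (hF_sum.of_nonneg_of_le hnonneg key) hF_sum
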